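/- In a binary-conflict-free net, if σt and σρ are finite firing sequences with the transition t not occurring in ρ, then σtρ and σρt are both firing sequences and σtρ ≡₀* σρt. -/

import Mathlib

open Relation

/-- A place/transition net with place type `S` and transition type `T`. -/
structure Net (S T : Type) where
  /-- arc weight from place `s` to transition `t` -/
  pre : T → S → ℕ
  /-- arc weight from transition `t` to place `s` -/
  post : T → S → ℕ
  /-- the initial marking -/
  M0 : S → ℕ
  pre_finite : ∀ t, {s | pre t s > 0}.Finite
  pre_nonempty : ∀ t, ∃ s, pre t s > 0
  post_finite : ∀ t, {s | post t s > 0}.Finite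

namespace Net

variable {S T : Type} (N : Net S T)

/-- the singleton step `{t}` is enabled at marking `M` -/
def Enabled (t : T) (M : S → ℕ) : Prop := ∀ s, N.pre t s ≤ M s

/-- the two-element multiset step `{t,u}` is enabled at marking `M` -/
def Enabled2 (t u : T) (M : S → ℕ) : Prop := ∀ s, N.pre t s + N.pre u s ≤ M s

/-- firing transition `t` leads from marking `M` to marking `M'` -/
def Fires (t : T) (M M' : S → ℕ) : Prop :=
  N.Enabled t M ∧ M' = fun s => M s - N.pre t s + N.post t s

/-- firing the finite transition sequence `σ` leads from `M` to `M'` -/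
inductive FiresList : (S → ℕ) → List T → (S → ℕ) → Prop
  | nil (M : S → ℕ) : FiresList M [] M
  | cons {M M₁ M' : S → ℕ} {t : T} {σ : List T} :
      N.Fires t M M₁ → FiresList M₁ σ M' → FiresList M (t :: σ) M'

/-- a marking is reachable -/
def Reachable (M : S → ℕ) : Prop := ∃ σ : List T, N.FiresList N.M0 σ M

/-- `σ` is a finite firing sequence of `N` -/
def FS (σ : List T) : Prop := ∃ M, N.FiresList N.M0 σ M

/-- `σ` is a (possibly infinite) firing sequence of `N` -/
def FSInf (σ : Stream'.Seq T) : Prop := ∀ n, N.FS (σ.take n)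

/-- adjacency `≡₀` on finite firing sequences -/
def Adj (σ ρ : List T) : Prop :=
  ∃ (α β : List T) (t u : T) (M : S → ℕ),
    σ = α ++ t :: u :: β ∧ ρ = α ++ u :: t :: β ∧
    N.FiresList N.M0 α M ∧ N.Enabled2 t u M ∧ N.FS σ ∧ N.FS ρ

/-- adjacency `≡₀` on possibly infinite firing sequences -/
def AdjSeq (σ ρ : Stream'.Seq T) : Prop :=
  ∃ (α : List T) (β : Stream'.Seq T) (t u : T) (M : S → ℕ),
    σ = (Stream'.Seq.ofList (α ++ [t, u])).append β ∧
    ρ = (Stream'.Seq.ofList (α ++ [u, t])).append β ∧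
    N.FiresList N.M0 α M ∧ N.Enabled2 t u M ∧ N.FSInf σ ∧ N.FSInf ρ

end Net

/-- the finite sequence `l` is a prefix of the possibly infinite sequence `s` -/
def ListPrefixSeq {T : Type} (l : List T) (s : Stream'.Seq T) : Prop :=
  s.take l.length = l

namespace Net

variable {S T : Type} (N : Net S T)

/-- the preorder `⊑₀^∞` on possibly infinite firing sequences -/
def Sqsubseteq0 (σ ρ : Stream'.Seq T) : Prop :=
  ∀ σ'' : List T, N.FS σ'' → ListPrefixSeq σ'' σ →
    ∃ σ' ρ' : List T, N.FS σ' ∧ N.FS ρ' ∧ σ'' <+: σ' ∧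
      ReflTransGen N.Adj σ' ρ' ∧ ListPrefixSeq ρ' ρ

end Net

/-- `N` is binary-conflict-free: any two distinct transitions individually
enabled at a reachable marking are enabled together as a step. -/
def Net.BinaryConflictFree {S T : Type} (N : Net S T) : Prop :=
  ∀ M, N.Reachable M → ∀ t u : T, t ≠ u →
    N.Enabled t M → N.Enabled u M → N.Enabled2 t u M

namespace Net

variable {S T : Type} (N : Net S T)

lemma firesList_append' {M M₁ M' : S → ℕ} {σ ρ : List T}
    (h1 : N.FiresList M σ M₁) (h2 : N.FiresList M₁ ρ M') :
    N.FiresList M (σ ++ ρ) M' := by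
  induction h1 with
  | nil => simpa
  | cons hf _ ih => exact .cons hf (ih h2)

lemma firesList_split {M M' : S → ℕ} {σ ρ : List T}
    (h : N.FiresList M (σ ++ ρ) M') :
    ∃ M₁, N.FiresList M σ M₁ ∧ N.FiresList M₁ ρ M' := by
  induction σ generalizing M with
  | nil => exact ⟨M, .nil M, by simpa using h⟩
  | cons a σ ih =>
    cases h with
    | cons hf hrest =>
      obtain ⟨M₁, h1, h2⟩ := ih hrest
      exact ⟨M₁, .cons hf h1, h2⟩

lemma firesList_det {M M₁ M₂ : S → ℕ} {σ : List T}
    (h1 : N.FiresList M σ M₁) (h2 : N.FiresList M σ M₂) : M₁ = M₂ := by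
  induction h1 generalizing M₂ with
  | nil => cases h2; rfl
  | @cons Ma Mb _ _ _ hf _ ih =>
    cases h2 with
    | @cons _ Mc _ _ _ hf' hrest =>
      have : Mb = Mc := hf.2.trans hf'.2.symm
      subst this
      exact ih hrest

end Net

theorem closing_diamond_without {S T : Type} (N : Net S T)
    (hN : N.BinaryConflictFree) (σ ρ : List T) (t : T) (hn : t ∉ ρ)
    (ht : N.FS (σ ++ [t])) (hρ : N.FS (σ ++ ρ)) :
    N.FS (σ ++ t :: ρ) ∧ N.FS (σ ++ ρ ++ [t]) ∧
      Relation.ReflTransGen N.Adj (σ ++ t :: ρ) (σ ++ ρ ++ [t]) := by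
  induction ρ generalizing σ with
  | nil =>
    simp only [List.append_nil]
    exact ⟨ht, ht, Relation.ReflTransGen.refl⟩
  | cons u ρ' ih =>
    have htu : t ≠ u := fun h => hn (h ▸ (List.mem_cons_self : u ∈ u :: ρ'))
    have hn' : t ∉ ρ' := fun h => hn (List.mem_cons_of_mem u h)
    -- extract markings
    obtain ⟨Mρ_end, hfρ⟩ := hρ
    obtain ⟨M, hσ, hρstep⟩ := N.firesList_split hfρ
    obtain ⟨Mt_end, hft⟩ := ht
    obtain ⟨M2, hσ2, htstep⟩ := N.firesList_split hft
    have hMeq : M2 = M := N.firesList_det hσ2 hσ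
    rw [hMeq] at htstep
    cases hρstep with
    | @cons _ Mu _ _ _ hfu hρ'step =>
      have hreach : N.Reachable M := ⟨σ, hσ⟩
      have hent : N.Enabled t M := by
        cases htstep with
        | cons hf _ => exact hf.1
      have henu : N.Enabled u M := hfu.1
      have h2 : N.Enabled2 t u M := hN M hreach t u htu hent henu
      -- t is enabled after firing u, and vice versa
      have hMu : Mu = fun s => M s - N.pre u s + N.post u s := hfu.2
      have hentu : N.Enabled t Mu := by
        intro s
        have := h2 s
        rw [hMu]
        simp only
        omega
      have henut : N.Enabled u (fun s => M s - N.pre t s + N.post t s) := by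
        intro s
        have := h2 s
        simp only
        omega
      -- firing t then u = firing u then t
      set Mt : S → ℕ := fun s => M s - N.pre t s + N.post t s with hMtdef
      set Mtu : S → ℕ := fun s => Mt s - N.pre u s + N.post u s with hMtudef
      have hcomm : Mtu = fun s => Mu s - N.pre t s + N.post t s := by
        funext s
        have := h2 s
        rw [hMu]
        simp only [hMtudef, hMtdef]
        omega
      -- σ ++ [u] ++ [t] is a firing sequence
      have hut : N.FS ((σ ++ [u]) ++ [t]) := by
        refine ⟨Mtu, N.firesList_append' (N.firesList_append' hσ
          (.cons hfu (.nil Mu))) (.cons ⟨hentu, ?_⟩ (.nil _))⟩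
        rw [hcomm]
      have hρ2 : N.FS ((σ ++ [u]) ++ ρ') := by
        exact ⟨Mρ_end, by simpa using hfρ⟩
      obtain ⟨ih1, ih2, ih3⟩ := ih (σ ++ [u]) hn' hut hρ2
      -- ih1 : N.FS ((σ ++ [u]) ++ t :: ρ')
      -- FS (σ ++ t :: u :: ρ')
      have hfs_tu : N.FS (σ ++ t :: u :: ρ') := by
        obtain ⟨Mfin, hfin⟩ := ih1
        obtain ⟨M', hσu', hrest'⟩ := N.firesList_split hfin
        -- hσu' : FiresList M0 (σ ++ [u]) M'
        obtain ⟨M'', hσ'', hu''⟩ := N.firesList_split hσu'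
        have : M'' = M := N.firesList_det hσ'' hσ
        subst this
        have hM' : M' = Mu := by
          cases hu'' with
          | cons hf hrest =>
            cases hrest
            exact hf.2.trans hMu.symm
        subst hM'
        cases hrest' with
        | @cons _ Mut _ _ _ hft' hρ'' =>
          have hMut : Mut = Mtu := by rw [hft'.2, hcomm]
          subst hMut
          refine ⟨Mfin, N.firesList_append' hσ (.cons ⟨hent, rfl⟩
            (.cons ⟨?_, ?_⟩ hρ''))⟩
          · exact henut
          · rfl
      have hadj : N.Adj (σ ++ t :: u :: ρ') ((σ ++ [u]) ++ t :: ρ') := by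
        refine ⟨σ, ρ', t, u, M, rfl, by simp, hσ, h2, hfs_tu, ih1⟩
      constructor
      · exact hfs_tu
      constructor
      · simpa using ih2
      · have : Relation.ReflTransGen N.Adj (σ ++ t :: u :: ρ')
            ((σ ++ [u]) ++ ρ' ++ [t]) :=
          Relation.ReflTransGen.head hadj ih3
        simpa using this
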